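/- Let c¹, c² ∈ ℕ₊ⁿ define a BUCO instance and let (H, c1, c2) be the associated MSp instance. For every spanner S of H that contains every edge e with c1(e) = 0 and does not contain the edge {s,t}, the stretch factor satisfies f2(S) = d^S_{c2}(s,t)/d^E_{c2}(s,t) = d^S_{c2}(s,t); in particular d^E_{c2}(s,t) = 1. -/

import Mathlib

namespace MSpPaper

open SimpleGraph

variable {V : Type*}

/-- Minimum total `c2`-weight of a walk from `u` to `v` using only edges in `F`
(the set of weights of such walks is a set of naturals; its infimum is `0` when no walk exists). -/
noncomputable def wdist (F : Set (Sym2 V)) (c2 : Sym2 V → ℕ) (u v : V) : ℕ :=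
  sInf (Set.range fun p : (SimpleGraph.fromEdgeSet F).Walk u v => (p.edges.map c2).sum)

/-- `S` is a spanner of `G`: a subset of the edges such that the resulting subgraph is connected. -/
def IsSpanner (G : SimpleGraph V) (S : Set (Sym2 V)) : Prop :=
  S ⊆ G.edgeSet ∧ (SimpleGraph.fromEdgeSet S).Connected

/-- First objective: total `c1`-cost of the spanner. -/
def f1 (c1 : Sym2 V → ℤ) (S : Finset (Sym2 V)) : ℤ := ∑ e ∈ S, c1 e

open scoped Classical in
/-- Second objective (stretch factor): maximum over pairs of distinct vertices of the
distance ratio `d^S(u,v)/d^E(u,v)` (junk value `0` if there is no pair of distinct vertices). -/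
noncomputable def f2 [Fintype V] (E S : Set (Sym2 V)) (c2 : Sym2 V → ℕ) : ℚ :=
  if h : ((Finset.univ : Finset (V × V)).filter fun p => p.1 ≠ p.2).Nonempty then
    ((Finset.univ : Finset (V × V)).filter fun p => p.1 ≠ p.2).sup' h
      (fun p => (wdist S c2 p.1 p.2 : ℚ) / (wdist E c2 p.1 p.2 : ℚ))
  else 0

/-- The value vector of a spanner. -/
noncomputable def valueVec [Fintype V] (G : SimpleGraph V) (c1 : Sym2 V → ℤ) (c2 : Sym2 V → ℕ)
    (S : Finset (Sym2 V)) : ℚ × ℚ :=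
  ((f1 c1 S : ℚ), f2 G.edgeSet (↑S) c2)

/-- `y'` dominates `y`: componentwise `≤` and unequal. -/
def Dominates (y' y : ℚ × ℚ) : Prop := y' ≤ y ∧ y' ≠ y

/-- The non-dominated set of an MSp instance. -/
def YN [Fintype V] (G : SimpleGraph V) (c1 : Sym2 V → ℤ) (c2 : Sym2 V → ℕ) : Set (ℚ × ℚ) :=
  {y | (∃ S : Finset (Sym2 V), IsSpanner G (↑S) ∧ valueVec G c1 c2 S = y) ∧
       ∀ S' : Finset (Sym2 V), IsSpanner G (↑S') → ¬ Dominates (valueVec G c1 c2 S') y}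


/-! ### The MSp instance associated with a BUCO instance (Section 4)

A BUCO instance is given by vectors `a = c¹` and `b = c²` in `ℕ₊ⁿ`; feasible
solutions are `x : Fin n → Bool` (`x i = true` meaning `x_i = 1`). -/

/-- Vertices of the graph `H`: for each `i`, the vertex `(i,0)` is `v_i`, `(i,1)` is `v_i'`,
and `(i,2)` is `w_i`. -/
abbrev Vtx (n : ℕ) := Fin n × Fin 3

/-- The weights `(c1, c2)` of the (ordered) pair `x y` of vertices of `H`;
`(0, 0)` (in particular `c2 = 0`) marks non-edges.
Here `M = (∑ i, a i) + 1`. -/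
def wtB (n : ℕ) (a b : Fin n → ℕ) (x y : Vtx n) : ℤ × ℕ :=
  if x.2 = 0 ∧ y.2 = 2 ∧ x.1 = y.1 then (0, b x.1 + 2)
  else if x.2 = 0 ∧ y.2 = 1 ∧ x.1 = y.1 then (0, 1)
  else if x.2 = 1 ∧ y.2 = 2 ∧ x.1 = y.1 then ((a x.1 : ℤ), 1)
  else if x.2 = 2 ∧ y.2 = 0 ∧ (y.1 : ℕ) = (x.1 : ℕ) + 1 then (0, 1)
  else if x.2 = 0 ∧ y.2 = 2 ∧ (x.1 : ℕ) = 0 ∧ (y.1 : ℕ) = n - 1 ∧ x.1 ≠ y.1 then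
    (((∑ i, a i : ℕ) : ℤ) + 1, 1)
  else (0, 0)

/-- The cost function `c1` of `H`. -/
def c1B (n : ℕ) (a b : Fin n → ℕ) : Sym2 (Vtx n) → ℤ :=
  Sym2.lift ⟨fun x y => (wtB n a b x y).1 + (wtB n a b y x).1, fun _ _ => add_comm _ _⟩

/-- The length function `c2` of `H`. -/
def c2B (n : ℕ) (a b : Fin n → ℕ) : Sym2 (Vtx n) → ℕ :=
  Sym2.lift ⟨fun x y => (wtB n a b x y).2 + (wtB n a b y x).2, fun _ _ => add_comm _ _⟩

/-- The edge set of `H`: exactly the pairs with positive length. -/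
def EB (n : ℕ) (a b : Fin n → ℕ) : Set (Sym2 (Vtx n)) := {e | c2B n a b e ≠ 0}

/-- The graph `H` associated with the BUCO instance `(a, b)`. -/
def HB (n : ℕ) (a b : Fin n → ℕ) : SimpleGraph (Vtx n) :=
  SimpleGraph.fromEdgeSet (EB n a b)

/-- The vertex `v_i`. -/
def vB (n : ℕ) (i : Fin n) : Vtx n := (i, 0)
/-- The vertex `v_i'`. -/
def pB (n : ℕ) (i : Fin n) : Vtx n := (i, 1)
/-- The vertex `w_i`. -/
def wB (n : ℕ) (i : Fin n) : Vtx n := (i, 2)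
/-- The vertex `s = v_1`. -/
def sB (n : ℕ) (hn : 0 < n) : Vtx n := (⟨0, hn⟩, 0)
/-- The vertex `t = w_n`. -/
def tB (n : ℕ) (hn : 0 < n) : Vtx n := (⟨n - 1, Nat.sub_lt hn one_pos⟩, 2)

open scoped Classical in
/-- The spanner `S_x` of `H` associated with a BUCO solution `x`: all edges of zero
`c1`-cost together with the edges `{v_i', w_i}` for every `i` with `x_i = 0`. -/
noncomputable def Sx (n : ℕ) (a b : Fin n → ℕ) (x : Fin n → Bool) : Finset (Sym2 (Vtx n)) :=
  (Finset.univ.filter fun e => e ∈ (HB n a b).edgeSet ∧ c1B n a b e = 0) ∪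
    (Finset.univ.filter fun i : Fin n => x i = false).image fun i => s(pB n i, wB n i)

/-- The value vector `(-c¹ᵀx, c²ᵀx)` of a BUCO solution `x`, as a vector in `ℚ²`. -/
def bucoVal (n : ℕ) (a b : Fin n → ℕ) (x : Fin n → Bool) : ℚ × ℚ :=
  (-(∑ i, if x i then (a i : ℚ) else 0), ∑ i, if x i then (b i : ℚ) else 0)

def wwt (c2 : Sym2 V → ℕ) {G : SimpleGraph V} {u v : V} (p : G.Walk u v) : ℕ :=
  (p.edges.map c2).sum

lemma wdist_le_walk (F : Set (Sym2 V)) (c2 : Sym2 V → ℕ) {u v : V}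
    (p : (fromEdgeSet F).Walk u v) : wdist F c2 u v ≤ wwt c2 p :=
  Nat.sInf_le ⟨p, rfl⟩

lemma wdist_self (F : Set (Sym2 V)) (c2 : Sym2 V → ℕ) (u : V) : wdist F c2 u u = 0 :=
  Nat.le_zero.1 (wdist_le_walk F c2 (Walk.nil))

lemma exists_walk_wdist (F : Set (Sym2 V)) (c2 : Sym2 V → ℕ) {u v : V}
    (h : (fromEdgeSet F).Reachable u v) :
    ∃ p : (fromEdgeSet F).Walk u v, wwt c2 p = wdist F c2 u v := by
  obtain ⟨p⟩ := h
  have hne : (Set.range fun p : (fromEdgeSet F).Walk u v => (p.edges.map c2).sum).Nonempty :=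
    ⟨_, ⟨p, rfl⟩⟩
  obtain ⟨q, hq⟩ := Nat.sInf_mem hne
  exact ⟨q, hq⟩

lemma wdist_symm (F : Set (Sym2 V)) (c2 : Sym2 V → ℕ) (u v : V) :
    wdist F c2 u v = wdist F c2 v u := by
  have key : ∀ x y : V, wdist F c2 x y ≤ wdist F c2 y x := by
    intro x y
    by_cases h : (fromEdgeSet F).Reachable y x
    · obtain ⟨p, hp⟩ := exists_walk_wdist F c2 h
      calc wdist F c2 x y ≤ wwt c2 p.reverse := wdist_le_walk F c2 p.reverse
        _ = wwt c2 p := by simp [wwt, Walk.edges_reverse, List.map_reverse, List.sum_reverse]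
        _ = _ := hp
    · have : wdist F c2 y x = 0 := by
        rw [wdist, Set.range_eq_empty_iff.2, Nat.sInf_empty]
        exact ⟨fun p => h ⟨p⟩⟩
      rw [this]
      have : wdist F c2 x y = 0 := by
        rw [wdist, Set.range_eq_empty_iff.2, Nat.sInf_empty]
        exact ⟨fun p => (h ⟨p.reverse⟩)⟩
      omega
  exact le_antisymm (key u v) (key v u)

lemma wdist_triangle (F : Set (Sym2 V)) (c2 : Sym2 V → ℕ) {u v w : V}
    (h1 : (fromEdgeSet F).Reachable u v) (h2 : (fromEdgeSet F).Reachable v w) :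
    wdist F c2 u w ≤ wdist F c2 u v + wdist F c2 v w := by
  obtain ⟨p, hp⟩ := exists_walk_wdist F c2 h1
  obtain ⟨q, hq⟩ := exists_walk_wdist F c2 h2
  calc wdist F c2 u w ≤ wwt c2 (p.append q) := wdist_le_walk F c2 _
    _ = wwt c2 p + wwt c2 q := by simp [wwt, Walk.edges_append]
    _ = _ := by rw [hp, hq]

lemma wdist_le_c2 (F : Set (Sym2 V)) (c2 : Sym2 V → ℕ) {u v : V}
    (h : (fromEdgeSet F).Adj u v) : wdist F c2 u v ≤ c2 s(u, v) := by
  have := wdist_le_walk F c2 (h.toWalk)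
  simpa [wwt] using this

lemma one_le_wwt (F : Set (Sym2 V)) (c2 : Sym2 V → ℕ) (hpos : ∀ e ∈ F, c2 e ≠ 0)
    {u v : V} (hne : u ≠ v) (p : (fromEdgeSet F).Walk u v) : 1 ≤ wwt c2 p := by
  cases p with
  | nil => exact absurd rfl hne
  | cons h q =>
    rename_i x
    have he : s(u, x) ∈ F := by
      have := Walk.edges_subset_edgeSet (Walk.cons h q) (by simp : s(u,x) ∈ (Walk.cons h q).edges)
      rw [edgeSet_fromEdgeSet] at this
      exact this.1
    have : 1 ≤ c2 s(u, x) := Nat.one_le_iff_ne_zero.2 (hpos _ he)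
    simp only [wwt, Walk.edges_cons, List.map_cons, List.sum_cons]
    omega

lemma one_le_wdist (F : Set (Sym2 V)) (c2 : Sym2 V → ℕ) (hpos : ∀ e ∈ F, c2 e ≠ 0)
    {u v : V} (hne : u ≠ v) (h : (fromEdgeSet F).Reachable u v) :
    1 ≤ wdist F c2 u v := by
  obtain ⟨p, hp⟩ := exists_walk_wdist F c2 h
  rw [← hp]; exact one_le_wwt F c2 hpos hne p

lemma abs_sub_le_wwt (F : Set (Sym2 V)) (c2 : Sym2 V → ℕ) (φ : V → ℤ)
    (hφ : ∀ x y : V, (fromEdgeSet F).Adj x y → |φ x - φ y| ≤ (c2 s(x, y) : ℤ))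
    {u v : V} (p : (fromEdgeSet F).Walk u v) : |φ u - φ v| ≤ (wwt c2 p : ℤ) := by
  induction p with
  | nil => simp [wwt]
  | cons h q ih =>
    rename_i x y z
    have h1 := hφ _ _ h
    have htri := abs_sub_le (φ x) (φ y) (φ z)
    simp only [wwt, Walk.edges_cons, List.map_cons, List.sum_cons] at *
    push_cast
    push_cast at ih
    linarith

lemma le_wdist_of_potential (F : Set (Sym2 V)) (c2 : Sym2 V → ℕ) (φ : V → ℤ)
    (hφ : ∀ x y : V, (fromEdgeSet F).Adj x y → |φ x - φ y| ≤ (c2 s(x, y) : ℤ))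
    {u v : V} (h : (fromEdgeSet F).Reachable u v) :
    |φ u - φ v| ≤ (wdist F c2 u v : ℤ) := by
  obtain ⟨p, hp⟩ := exists_walk_wdist F c2 h
  rw [← hp]; exact abs_sub_le_wwt F c2 φ hφ p

lemma weight_one_exists_edge (F : Set (Sym2 V)) (c2 : Sym2 V → ℕ)
    (hpos : ∀ e ∈ F, c2 e ≠ 0) {u v : V} (hne : u ≠ v)
    (h : (fromEdgeSet F).Reachable u v) (hw : wdist F c2 u v = 1) :
    s(u, v) ∈ F ∧ c2 s(u, v) = 1 := by
  obtain ⟨p, hp⟩ := exists_walk_wdist F c2 h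
  rw [hw] at hp
  cases p with
  | nil => exact absurd rfl hne
  | cons hadj q =>
    rename_i x
    cases q with
    | nil =>
      have he : s(u, v) ∈ F := by
        exact ((SimpleGraph.fromEdgeSet_adj F).1 hadj).1
      refine ⟨he, ?_⟩
      simpa [wwt] using hp
    | cons hadj2 r =>
      rename_i y
      exfalso
      have hx : s(u, x) ∈ F := ((SimpleGraph.fromEdgeSet_adj F).1 hadj).1
      have hy : s(x, y) ∈ F := ((SimpleGraph.fromEdgeSet_adj F).1 hadj2).1
      have h1 : 1 ≤ c2 s(u, x) := Nat.one_le_iff_ne_zero.2 (hpos _ hx)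
      have h2 : 1 ≤ c2 s(x, y) := Nat.one_le_iff_ne_zero.2 (hpos _ hy)
      simp only [wwt, Walk.edges_cons, List.map_cons, List.sum_cons] at hp
      omega


lemma wt_vw (i : Fin n) : wtB n a b (vB n i) (wB n i) = (0, b i + 2) := by
  simp [wtB, vB, wB]
lemma wt_wv (i : Fin n) : wtB n a b (wB n i) (vB n i) = (0, 0) := by
  simp [wtB, vB, wB]
lemma wt_vp (i : Fin n) : wtB n a b (vB n i) (pB n i) = (0, 1) := by
  simp [wtB, vB, pB]
lemma wt_pv (i : Fin n) : wtB n a b (pB n i) (vB n i) = (0, 0) := by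
  simp [wtB, vB, pB]
lemma wt_pw (i : Fin n) : wtB n a b (pB n i) (wB n i) = ((a i : ℤ), 1) := by
  simp [wtB, pB, wB]
lemma wt_wp (i : Fin n) : wtB n a b (wB n i) (pB n i) = (0, 0) := by
  simp [wtB, pB, wB]
lemma wt_wsucc (i j : Fin n) (h : (j : ℕ) = (i : ℕ) + 1) :
    wtB n a b (wB n i) (vB n j) = (0, 1) := by
  simp [wtB, vB, wB, h]
lemma wt_succw (i j : Fin n) (h : (j : ℕ) = (i : ℕ) + 1) :
    wtB n a b (vB n j) (wB n i) = (0, 0) := by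
  have hji : j ≠ i := by intro e; rw [e] at h; omega
  simp only [wtB, vB, wB]
  split_ifs with h1 h2 h3 h4 h5
  · exact absurd h1.2.2 hji
  · exact absurd h2.2.1 (by decide)
  · exact absurd h3.1 (by decide)
  · exact absurd h4.1 (by decide)
  · have := h5.2.2.1; omega
  · rfl

lemma wt_st (hn : 0 < n) (hn2 : 2 ≤ n) :
    wtB n a b (sB n hn) (tB n hn) = (((∑ i, a i : ℕ) : ℤ) + 1, 1) := by
  simp only [wtB, sB, tB]
  split_ifs with h1 h2 h3 h4 h5
  · exfalso; have := h1.2.2; have := congrArg Fin.val this; simp at this; omega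
  · exact absurd h2.2.1 (by decide)
  · exact absurd h3.1 (by decide)
  · exact absurd h4.1 (by decide)
  · rfl
  · exfalso
    apply h5
    refine ⟨trivial, trivial, trivial, trivial, fun e => ?_⟩
    have := congrArg Fin.val e; simp at this; omega

lemma wt_ts (hn : 0 < n) (hn2 : 2 ≤ n) :
    wtB n a b (tB n hn) (sB n hn) = (0, 0) := by
  simp only [wtB, sB, tB]
  split_ifs with h1 h2 h3 h4 h5
  · exact absurd h1.1 (by decide)
  · exact absurd h2.1 (by decide)
  · exact absurd h3.1 (by decide)
  · have := h4.2.2; simp at this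
  · exact absurd h5.1 (by decide)
  · rfl

/-- Case analysis: if `wtB x y` has positive length then the pair is one of the
five edge families. -/
lemma wt_cases (x y : Vtx n) (h : (wtB n a b x y).2 ≠ 0) :
    (x = vB n x.1 ∧ y = wB n x.1 ∧ x.1 = y.1 ∧ (wtB n a b x y).2 = b x.1 + 2) ∨
    (x = vB n x.1 ∧ y = pB n x.1 ∧ x.1 = y.1 ∧ (wtB n a b x y).2 = 1) ∨
    (x = pB n x.1 ∧ y = wB n x.1 ∧ x.1 = y.1 ∧ (wtB n a b x y).2 = 1) ∨
    (x = wB n x.1 ∧ y = vB n y.1 ∧ (y.1 : ℕ) = (x.1 : ℕ) + 1 ∧ (wtB n a b x y).2 = 1) ∨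
    (x = vB n x.1 ∧ y = wB n y.1 ∧ (x.1 : ℕ) = 0 ∧ (y.1 : ℕ) = n - 1 ∧ x.1 ≠ y.1 ∧
      (wtB n a b x y).2 = 1) := by
  obtain ⟨i, xk⟩ := x
  obtain ⟨j, yk⟩ := y
  simp only [wtB] at h ⊢
  split_ifs at h ⊢ with h1 h2 h3 h4 h5
  · obtain ⟨e1, e2, e3⟩ := h1
    exact Or.inl ⟨by simp [vB, e1], by simp [wB, e2, e3], e3, rfl⟩
  · obtain ⟨e1, e2, e3⟩ := h2
    exact Or.inr (Or.inl ⟨by simp [vB, e1], by simp [pB, e2, e3], e3, rfl⟩)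
  · obtain ⟨e1, e2, e3⟩ := h3
    exact Or.inr (Or.inr (Or.inl ⟨by simp [pB, e1], by simp [wB, e2, e3], e3, rfl⟩))
  · obtain ⟨e1, e2, e3⟩ := h4
    exact Or.inr (Or.inr (Or.inr (Or.inl ⟨by simp [wB, e1], by simp [vB, e2], e3, rfl⟩)))
  · obtain ⟨e1, e2, e3, e4, e5⟩ := h5
    exact Or.inr (Or.inr (Or.inr (Or.inr ⟨by simp [vB, e1], by simp [wB, e2], e3, e4, e5, rfl⟩)))
  · exact absurd rfl h

lemma c2B_mk (x y : Vtx n) : c2B n a b s(x, y) = (wtB n a b x y).2 + (wtB n a b y x).2 :=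
  Sym2.lift_mk _ _ _
lemma c1B_mk (x y : Vtx n) : c1B n a b s(x, y) = (wtB n a b x y).1 + (wtB n a b y x).1 :=
  Sym2.lift_mk _ _ _

lemma c2B_vw (i : Fin n) : c2B n a b s(vB n i, wB n i) = b i + 2 := by
  rw [c2B_mk, wt_vw, wt_wv]; rfl
lemma c1B_vw (i : Fin n) : c1B n a b s(vB n i, wB n i) = 0 := by
  rw [c1B_mk, wt_vw, wt_wv]; rfl
lemma c2B_vp (i : Fin n) : c2B n a b s(vB n i, pB n i) = 1 := by
  rw [c2B_mk, wt_vp, wt_pv]; rfl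
lemma c1B_vp (i : Fin n) : c1B n a b s(vB n i, pB n i) = 0 := by
  rw [c1B_mk, wt_vp, wt_pv]; rfl
lemma c2B_pw (i : Fin n) : c2B n a b s(pB n i, wB n i) = 1 := by
  rw [c2B_mk, wt_pw, wt_wp]; rfl
lemma c2B_wv (i j : Fin n) (h : (j : ℕ) = (i : ℕ) + 1) :
    c2B n a b s(wB n i, vB n j) = 1 := by
  rw [c2B_mk, wt_wsucc i j h, wt_succw i j h]; rfl
lemma c1B_wv (i j : Fin n) (h : (j : ℕ) = (i : ℕ) + 1) :
    c1B n a b s(wB n i, vB n j) = 0 := by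
  rw [c1B_mk, wt_wsucc i j h, wt_succw i j h]; rfl
lemma c2B_st (hn : 0 < n) (hn2 : 2 ≤ n) : c2B n a b s(sB n hn, tB n hn) = 1 := by
  rw [c2B_mk, wt_st hn hn2, wt_ts hn hn2]; rfl

lemma mem_edgeSet_HB {x y : Vtx n} :
    s(x, y) ∈ (HB n a b).edgeSet ↔ c2B n a b s(x, y) ≠ 0 ∧ x ≠ y := by
  rw [HB, edgeSet_fromEdgeSet]
  simp [EB, Sym2.mk_isDiag_iff]

lemma vB_ne_wB (i : Fin n) : vB n i ≠ wB n i := by simp [vB, wB]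
lemma vB_ne_pB (i : Fin n) : vB n i ≠ pB n i := by simp [vB, pB]
lemma pB_ne_wB (i : Fin n) : pB n i ≠ wB n i := by simp [pB, wB]
lemma wB_ne_vB' (i j : Fin n) (h : (j : ℕ) = (i : ℕ) + 1) : wB n i ≠ vB n j := by
  simp [vB, wB]
lemma sB_ne_tB (hn : 0 < n) : sB n hn ≠ tB n hn := by simp [sB, tB]

lemma memE_vw (i : Fin n) : s(vB n i, wB n i) ∈ (HB n a b).edgeSet :=
  mem_edgeSet_HB.2 ⟨by rw [c2B_vw]; omega, vB_ne_wB i⟩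
lemma memE_vp (i : Fin n) : s(vB n i, pB n i) ∈ (HB n a b).edgeSet :=
  mem_edgeSet_HB.2 ⟨by rw [c2B_vp]; omega, vB_ne_pB i⟩
lemma memE_pw (i : Fin n) : s(pB n i, wB n i) ∈ (HB n a b).edgeSet :=
  mem_edgeSet_HB.2 ⟨by rw [c2B_pw]; omega, pB_ne_wB i⟩
lemma memE_wv (i j : Fin n) (h : (j : ℕ) = (i : ℕ) + 1) :
    s(wB n i, vB n j) ∈ (HB n a b).edgeSet :=
  mem_edgeSet_HB.2 ⟨by rw [c2B_wv i j h]; omega, wB_ne_vB' i j h⟩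
lemma memE_st (hn : 0 < n) (hn2 : 2 ≤ n) : s(sB n hn, tB n hn) ∈ (HB n a b).edgeSet :=
  mem_edgeSet_HB.2 ⟨by rw [c2B_st hn hn2]; omega, sB_ne_tB hn⟩

lemma abs_cast_le {p q c : ℕ} (h1 : p ≤ q) (h2 : q ≤ p + c) : |(p:ℤ) - (q:ℤ)| ≤ (c:ℤ) := by
  rw [abs_sub_comm, abs_of_nonneg (by push_cast; omega)]; push_cast; omega

section SSec
open scoped Classical

variable (n : ℕ) (a b : Fin n → ℕ) (S : Finset (Sym2 (Vtx n)))

/-- segment cost -/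
noncomputable def mS (i : Fin n) : ℕ := if s(pB n i, wB n i) ∈ S then 2 else b i + 2

/-- segment cost as a function on `ℕ` -/
noncomputable def mmS (k : ℕ) : ℕ := if h : k < n then mS n b S ⟨k, h⟩ else 2

/-- the potential -/
noncomputable def φS (x : Vtx n) : ℕ :=
  (∑ j ∈ Finset.range x.1.val, (mmS n b S j + 1)) +
    (if x.2 = 0 then 0 else if x.2 = 1 then 1 else mmS n b S x.1.val)

noncomputable def DS : ℕ := (∑ j ∈ Finset.range n, (mmS n b S j + 1)) - 1

variable {n a b S}

lemma two_le_mS (i : Fin n) : 2 ≤ mS n b S i := by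
  unfold mS; split_ifs <;> omega
lemma mS_le (i : Fin n) : mS n b S i ≤ b i + 2 := by
  unfold mS; split_ifs <;> omega
lemma two_le_mmS (k : ℕ) : 2 ≤ mmS n b S k := by
  unfold mmS; split_ifs; exacts [two_le_mS _, le_refl 2]
lemma mmS_eq (i : Fin n) : mmS n b S i.val = mS n b S i := by
  unfold mmS; rw [dif_pos i.isLt]

lemma φS_vB (i : Fin n) : φS n b S (vB n i) = ∑ j ∈ Finset.range i.val, (mmS n b S j + 1) := by
  simp [φS, vB]
lemma φS_pB (i : Fin n) :
    φS n b S (pB n i) = (∑ j ∈ Finset.range i.val, (mmS n b S j + 1)) + 1 := by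
  simp [φS, pB]
lemma φS_wB (i : Fin n) :
    φS n b S (wB n i) = (∑ j ∈ Finset.range i.val, (mmS n b S j + 1)) + mS n b S i := by
  simp [φS, wB, mmS_eq]

lemma φS_sB (hn : 0 < n) : φS n b S (sB n hn) = 0 := by
  simp [φS, sB]
lemma φS_tB (hn : 0 < n) : φS n b S (tB n hn) = DS n b S := by
  have h : n - 1 + 1 = n := Nat.succ_pred_eq_of_pos hn
  have hs := Finset.sum_range_succ (fun j => mmS n b S j + 1) (n-1)
  rw [h] at hs
  simp only [φS, tB, DS, hs, if_neg (show ¬(2:Fin 3) = 0 by decide),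
    if_neg (show ¬(2:Fin 3) = 1 by decide)]
  simp only [Fin.isValue, Fin.reduceEq, ↓reduceIte]
  omega

lemma φS_le_DS (x : Vtx n) : φS n b S x ≤ DS n b S := by
  have hlt := x.1.isLt
  have h1 : (∑ j ∈ Finset.range (x.1.val+1), (mmS n b S j + 1)) ≤
      ∑ j ∈ Finset.range n, (mmS n b S j + 1) :=
    Finset.sum_le_sum_of_subset (by rw [Finset.range_subset_range]; omega)
  rw [Finset.sum_range_succ] at h1
  have h2 := two_le_mmS (S := S) (n := n) (b := b) x.1.val
  have hφ : φS n b S x ≤ (∑ j ∈ Finset.range x.1.val, (mmS n b S j + 1)) +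
      mmS n b S x.1.val := by
    unfold φS
    split_ifs <;> omega
  unfold DS
  omega

lemma DS_ge (hn2 : 2 ≤ n) (i : Fin n) : mS n b S i + 3 ≤ DS n b S := by
  have h1 : (mmS n b S i.val + 1) + ∑ j ∈ (Finset.range n).erase i.val, (mmS n b S j + 1)
      = ∑ j ∈ Finset.range n, (mmS n b S j + 1) :=
    Finset.add_sum_erase (Finset.range n) (fun j => mmS n b S j + 1) (show i.val ∈ Finset.range n by simp)
  have hcard : ((Finset.range n).erase i.val).card = n - 1 := by
    rw [Finset.card_erase_of_mem (show i.val ∈ Finset.range n by simpa using i.isLt), Finset.card_range]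
  have h2 : 3 * ((Finset.range n).erase i.val).card ≤
      ∑ j ∈ (Finset.range n).erase i.val, (mmS n b S j + 1) := by
    calc 3 * ((Finset.range n).erase i.val).card
        = ∑ _j ∈ (Finset.range n).erase i.val, 3 := by rw [Finset.sum_const]; ring
      _ ≤ _ := Finset.sum_le_sum (fun j _ => by have := two_le_mmS (S := S) (n := n) (b := b) j; omega)
  rw [hcard] at h2
  have h3 := mmS_eq (S := S) (b := b) i
  have := two_le_mS (S := S) (n := n) (b := b) i
  unfold DS
  omega

lemma five_le_DS (hn2 : 2 ≤ n) : 5 ≤ DS n b S := by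
  have h1 := DS_ge (S := S) (b := b) hn2 ⟨0, by omega⟩
  have h2 := two_le_mS (S := S) (n := n) (b := b) (⟨0, by omega⟩ : Fin n)
  omega

end SSec

section Main
variable {n : ℕ} {a b : Fin n → ℕ} {S : Finset (Sym2 (Vtx n))}
  (hspan : IsSpanner (HB n a b) (↑S : Set (Sym2 (Vtx n))))
  (hzero : ∀ e ∈ (HB n a b).edgeSet, c1B n a b e = 0 → e ∈ S)

include hzero in
lemma memS_vw (i : Fin n) : s(vB n i, wB n i) ∈ S := hzero _ (memE_vw i) (c1B_vw i)
include hzero in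
lemma memS_vp (i : Fin n) : s(vB n i, pB n i) ∈ S := hzero _ (memE_vp i) (c1B_vp i)
include hzero in
lemma memS_wv (i j : Fin n) (h : (j : ℕ) = (i : ℕ) + 1) : s(wB n i, vB n j) ∈ S :=
  hzero _ (memE_wv i j h) (c1B_wv i j h)

lemma adjS {x y : Vtx n} (h : s(x, y) ∈ S) (hne : x ≠ y) :
    (fromEdgeSet (↑S : Set (Sym2 (Vtx n)))).Adj x y :=
  (fromEdgeSet_adj _).2 ⟨h, hne⟩

include hspan in
lemma c2B_pos_S : ∀ e ∈ (↑S : Set (Sym2 (Vtx n))), c2B n a b e ≠ 0 := by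
  intro e he
  have := hspan.1 he
  rw [HB, edgeSet_fromEdgeSet] at this
  exact this.1

lemma c2B_pos_E : ∀ e ∈ (HB n a b).edgeSet, c2B n a b e ≠ 0 := by
  intro e he
  rw [HB, edgeSet_fromEdgeSet] at he
  exact he.1

include hspan in
lemma reachS (u v : Vtx n) : (fromEdgeSet (↑S : Set (Sym2 (Vtx n)))).Reachable u v :=
  hspan.2.preconnected u v

-- canonical walk upper bounds
include hspan hzero in
lemma wdist_vp (i : Fin n) : wdist (↑S) (c2B n a b) (vB n i) (pB n i) ≤ 1 := by
  have := wdist_le_c2 (↑S) (c2B n a b) (adjS (memS_vp hzero i) (vB_ne_pB i))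
  rwa [c2B_vp] at this

include hspan hzero in
lemma wdist_vw (i : Fin n) : wdist (↑S) (c2B n a b) (vB n i) (wB n i) ≤ mS n b S i := by
  by_cases hC : s(pB n i, wB n i) ∈ S
  · have h1 := wdist_vp hspan hzero i
    have h2 : wdist (↑S) (c2B n a b) (pB n i) (wB n i) ≤ 1 := by
      have := wdist_le_c2 (↑S) (c2B n a b) (adjS hC (pB_ne_wB i))
      rwa [c2B_pw] at this
    have h3 := wdist_triangle (↑S) (c2B n a b)
      (reachS hspan (vB n i) (pB n i)) (reachS hspan (pB n i) (wB n i))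
    have : mS n b S i = 2 := if_pos hC
    omega
  · have := wdist_le_c2 (↑S) (c2B n a b) (adjS (memS_vw hzero i) (vB_ne_wB i))
    rw [c2B_vw] at this
    have : mS n b S i = b i + 2 := if_neg hC
    omega

include hspan hzero in
lemma wdist_pw (i : Fin n) : wdist (↑S) (c2B n a b) (pB n i) (wB n i) ≤ mS n b S i + 1 := by
  have h1 : wdist (↑S) (c2B n a b) (pB n i) (vB n i) ≤ 1 := by
    rw [wdist_symm]; exact wdist_vp hspan hzero i
  have h2 := wdist_vw hspan hzero i
  have h3 := wdist_triangle (↑S) (c2B n a b)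
    (reachS hspan (pB n i) (vB n i)) (reachS hspan (vB n i) (wB n i))
  omega

include hspan hzero in
lemma wdist_wv (i j : Fin n) (h : (j : ℕ) = (i : ℕ) + 1) :
    wdist (↑S) (c2B n a b) (wB n i) (vB n j) ≤ 1 := by
  have := wdist_le_c2 (↑S) (c2B n a b) (adjS (memS_wv hzero i j h) (wB_ne_vB' i j h))
  rwa [c2B_wv i j h] at this

include hspan hzero in
lemma wdist_s_vB (hn : 0 < n) : ∀ k (hk : k < n),
    wdist (↑S) (c2B n a b) (sB n hn) (vB n ⟨k, hk⟩) ≤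
      ∑ j ∈ Finset.range k, (mmS n b S j + 1) := by
  intro k
  induction k with
  | zero =>
    intro hk
    have : vB n ⟨0, hk⟩ = sB n hn := rfl
    rw [this, wdist_self]
    simp
  | succ k ih =>
    intro hk
    have hk' : k < n := by omega
    have h1 := ih hk'
    have h2 := wdist_vw hspan hzero ⟨k, hk'⟩
    have h3 := wdist_wv hspan hzero ⟨k, hk'⟩ ⟨k+1, hk⟩ rfl
    have t1 := wdist_triangle (↑S) (c2B n a b)
      (reachS hspan (sB n hn) (vB n ⟨k, hk'⟩)) (reachS hspan (vB n ⟨k, hk'⟩) (wB n ⟨k, hk'⟩))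
    have t2 := wdist_triangle (↑S) (c2B n a b)
      (reachS hspan (sB n hn) (wB n ⟨k, hk'⟩)) (reachS hspan (wB n ⟨k, hk'⟩) (vB n ⟨k+1, hk⟩))
    rw [Finset.sum_range_succ]
    have hm : mmS n b S k = mS n b S ⟨k, hk'⟩ := mmS_eq ⟨k, hk'⟩
    omega

include hspan hzero in
lemma wdist_s_le_φ (hn : 0 < n) (x : Vtx n) :
    wdist (↑S) (c2B n a b) (sB n hn) x ≤ φS n b S x := by
  obtain ⟨i, k⟩ := x
  have hv := wdist_s_vB hspan hzero hn i.val i.isLt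
  have hvx : vB n ⟨i.val, i.isLt⟩ = vB n i := by simp [vB]
  rw [hvx] at hv
  fin_cases k
  · show wdist (↑S) (c2B n a b) (sB n hn) (vB n i) ≤ φS n b S (vB n i)
    rw [φS_vB]; exact hv
  · show wdist (↑S) (c2B n a b) (sB n hn) (pB n i) ≤ φS n b S (pB n i)
    rw [φS_pB]
    have h2 := wdist_vp hspan hzero i
    have t1 := wdist_triangle (↑S) (c2B n a b)
      (reachS hspan (sB n hn) (vB n i)) (reachS hspan (vB n i) (pB n i))
    omega
  · show wdist (↑S) (c2B n a b) (sB n hn) (wB n i) ≤ φS n b S (wB n i)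
    rw [φS_wB]
    have h2 := wdist_vw hspan hzero i
    have t1 := wdist_triangle (↑S) (c2B n a b)
      (reachS hspan (sB n hn) (vB n i)) (reachS hspan (vB n i) (wB n i))
    omega

end Main

section Main2
variable {n : ℕ} {a b : Fin n → ℕ} {S : Finset (Sym2 (Vtx n))} (hn : 0 < n)
  (hspan : IsSpanner (HB n a b) (↑S : Set (Sym2 (Vtx n))))
  (hzero : ∀ e ∈ (HB n a b).edgeSet, c1B n a b e = 0 → e ∈ S)
  (hst : s(sB n hn, tB n hn) ∉ S)

lemma eq_sB {x : Vtx n} (h0 : x = vB n x.1) (h1 : x.1.val = 0) : x = sB n hn := by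
  rw [h0]; unfold vB sB; exact congrArg (·, (0:Fin 3)) (Fin.ext h1)

lemma eq_tB {x : Vtx n} (h0 : x = wB n x.1) (h1 : x.1.val = n - 1) : x = tB n hn := by
  rw [h0]; unfold wB tB; exact congrArg (·, (2:Fin 3)) (Fin.ext h1)

include hst in
lemma pot_half {x y : Vtx n} (hxy : s(x, y) ∈ S) (h : (wtB n a b x y).2 ≠ 0) :
    |(φS n b S x : ℤ) - (φS n b S y : ℤ)| ≤ ((wtB n a b x y).2 : ℤ) := by
  rcases wt_cases x y h with ⟨e1, e2, e3, e4⟩ | ⟨e1, e2, e3, e4⟩ | ⟨e1, e2, e3, e4⟩ |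
    ⟨e1, e2, e3, e4⟩ | ⟨e1, e2, e3, e4, e5, e6⟩
  · have hφx := φS_vB (S := S) (b := b) x.1; rw [← e1] at hφx
    have hφy := φS_wB (S := S) (b := b) x.1; rw [← e2] at hφy
    rw [e4, hφx, hφy]
    exact abs_cast_le (by omega) (by have := mS_le (S := S) (b := b) x.1; omega)
  · have hφx := φS_vB (S := S) (b := b) x.1; rw [← e1] at hφx
    have hφy := φS_pB (S := S) (b := b) x.1; rw [← e2] at hφy
    rw [e4, hφx, hφy]
    exact abs_cast_le (by omega) (by omega)
  · have hm : mS n b S x.1 = 2 := by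
      unfold mS
      rw [if_pos]
      rwa [e1, e2] at hxy
    have hφx := φS_pB (S := S) (b := b) x.1; rw [← e1] at hφx
    have hφy := φS_wB (S := S) (b := b) x.1; rw [← e2] at hφy
    rw [e4, hφx, hφy, hm]
    exact abs_cast_le (by omega) (by omega)
  · have hφx := φS_wB (S := S) (b := b) x.1; rw [← e1] at hφx
    have hφy := φS_vB (S := S) (b := b) y.1; rw [← e2] at hφy
    rw [e4, hφx, hφy, e3, Finset.sum_range_succ, mmS_eq]
    exact abs_cast_le (by omega) (by omega)
  · exfalso
    apply hst
    rwa [← eq_sB hn e1 e3, ← eq_tB hn e2 e4]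

include hspan hst in
lemma pot : ∀ x y : Vtx n, (fromEdgeSet (↑S : Set (Sym2 (Vtx n)))).Adj x y →
    |(φS n b S x : ℤ) - (φS n b S y : ℤ)| ≤ (c2B n a b s(x, y) : ℤ) := by
  intro x y hadj
  obtain ⟨hxy, hne⟩ := (fromEdgeSet_adj _).1 hadj
  have hc : c2B n a b s(x, y) ≠ 0 := c2B_pos_S hspan _ hxy
  rw [c2B_mk] at hc ⊢
  by_cases h : (wtB n a b x y).2 ≠ 0
  · have := pot_half hn hst hxy h
    push_cast
    omega
  · have h' : (wtB n a b y x).2 ≠ 0 := by omega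
    have hyx : s(y, x) ∈ S := by rwa [Sym2.eq_swap]
    have := pot_half hn hst hyx h'
    rw [abs_sub_comm]
    push_cast
    omega

include hspan hst in
lemma DS_le_wdist : (DS n b S : ℤ) ≤ (wdist (↑S) (c2B n a b) (sB n hn) (tB n hn) : ℤ) := by
  have := le_wdist_of_potential (↑S) (c2B n a b) (fun x => (φS n b S x : ℤ))
    (pot hn hspan hst) (reachS hspan (sB n hn) (tB n hn))
  rw [φS_sB hn, φS_tB hn] at this
  simpa [Nat.abs_cast] using this

include hspan hzero in
lemma class_half (hn2 : 2 ≤ n) {u v : Vtx n} (h1 : (wtB n a b u v).2 = 1) :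
    wdist (↑S) (c2B n a b) u v ≤ DS n b S ∨ (u = sB n hn ∧ v = tB n hn) := by
  rcases wt_cases u v (by rw [h1]; exact one_ne_zero) with ⟨e1, e2, e3, e4⟩ | ⟨e1, e2, e3, e4⟩ | ⟨e1, e2, e3, e4⟩ |
    ⟨e1, e2, e3, e4⟩ | ⟨e1, e2, e3, e4, e5, e6⟩
  · exfalso; omega
  · left
    rw [e1, e2]
    have := wdist_vp hspan hzero u.1
    have := five_le_DS (S := S) (b := b) hn2
    omega
  · left
    rw [e1, e2]
    have := wdist_pw hspan hzero u.1
    have := DS_ge (S := S) (b := b) hn2 u.1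
    omega
  · left
    rw [e1, e2]
    have := wdist_wv hspan hzero u.1 v.1 e3
    have := five_le_DS (S := S) (b := b) hn2
    omega
  · exact Or.inr ⟨eq_sB hn e1 e3, eq_tB hn e2 e4⟩

end Main2


/-- For every spanner `S` of `H` containing all edges of zero `c1`-cost
and not containing `{s, t}`, the stretch factor is attained at the pair `(s, t)`:
`f2(S) = d^S(s,t)/d^E(s,t) = d^S(s,t)`, and in particular `d^E(s,t) = 1`. -/
theorem stretch_attained_at_st_HB (n : ℕ) (hn : 0 < n) (a b : Fin n → ℕ)
    (ha : ∀ i, 0 < a i) (hb : ∀ i, 0 < b i)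
    (S : Finset (Sym2 (Vtx n))) (hspan : IsSpanner (HB n a b) (↑S))
    (hzero : ∀ e ∈ (HB n a b).edgeSet, c1B n a b e = 0 → e ∈ S)
    (hst : s(sB n hn, tB n hn) ∉ S) :
    f2 (HB n a b).edgeSet (↑S) (c2B n a b) =
        (wdist (↑S) (c2B n a b) (sB n hn) (tB n hn) : ℚ) /
          (wdist (HB n a b).edgeSet (c2B n a b) (sB n hn) (tB n hn) : ℚ) ∧
      f2 (HB n a b).edgeSet (↑S) (c2B n a b) =
        (wdist (↑S) (c2B n a b) (sB n hn) (tB n hn) : ℚ) ∧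
      wdist (HB n a b).edgeSet (c2B n a b) (sB n hn) (tB n hn) = 1 := by
  rcases Nat.lt_or_ge n 2 with hn2 | hn2
  · exfalso
    have hn1 : n = 1 := by omega
    subst hn1
    have h1 : sB 1 hn = vB 1 ⟨0, hn⟩ := rfl
    have h2 : tB 1 hn = wB 1 ⟨0, hn⟩ := rfl
    exact hst (by rw [h1, h2]; exact hzero _ (memE_vw _) (c1B_vw _))
  -- setup
  have hposE := c2B_pos_E (n := n) (a := a) (b := b)
  have hposS := c2B_pos_S hspan
  have hreachE : ∀ u v : Vtx n, (fromEdgeSet ((HB n a b).edgeSet)).Reachable u v := by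
    intro u v
    exact (reachS hspan u v).mono (fromEdgeSet_mono hspan.1)
  -- d^E(s,t) = 1
  have hestle : wdist (HB n a b).edgeSet (c2B n a b) (sB n hn) (tB n hn) ≤ 1 := by
    have hadj : (fromEdgeSet ((HB n a b).edgeSet)).Adj (sB n hn) (tB n hn) := by
      rw [fromEdgeSet_edgeSet]
      exact (HB n a b).mem_edgeSet.1 (memE_st hn hn2)
    have := wdist_le_c2 _ (c2B n a b) hadj
    rwa [c2B_st hn hn2] at this
  have hestge := one_le_wdist (HB n a b).edgeSet (c2B n a b) hposE (sB_ne_tB hn)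
    (hreachE _ _)
  have hest : wdist (HB n a b).edgeSet (c2B n a b) (sB n hn) (tB n hn) = 1 :=
    le_antisymm hestle hestge
  -- lower bound
  have hD := DS_le_wdist hn hspan hst
  have hDn : DS n b S ≤ wdist (↑S) (c2B n a b) (sB n hn) (tB n hn) := by exact_mod_cast hD
  -- key bound
  have key : ∀ u v : Vtx n, u ≠ v →
      wdist (↑S) (c2B n a b) u v ≤
        wdist (↑S) (c2B n a b) (sB n hn) (tB n hn) *
          wdist (HB n a b).edgeSet (c2B n a b) u v := by
    intro u v huv
    have hE1 : 1 ≤ wdist (HB n a b).edgeSet (c2B n a b) u v :=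
      one_le_wdist _ _ hposE huv (hreachE u v)
    rcases eq_or_lt_of_le hE1 with hE | hE
    · obtain ⟨hmem, hc2⟩ := weight_one_exists_edge (HB n a b).edgeSet (c2B n a b)
        hposE huv (hreachE u v) hE.symm
      rw [c2B_mk] at hc2
      rw [← hE, Nat.mul_one]
      have hone : (wtB n a b u v).2 = 1 ∨ (wtB n a b v u).2 = 1 := by omega
      rcases hone with h | h
      · rcases class_half hn hspan hzero hn2 h with hle | ⟨hu, hv⟩
        · omega
        · rw [hu, hv]
      · rcases class_half hn hspan hzero hn2 h with hle | ⟨hv', hu'⟩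
        · rw [wdist_symm]; omega
        · rw [hu', hv', wdist_symm]
    · have t1 := wdist_triangle (↑S) (c2B n a b)
        (reachS hspan u (sB n hn)) (reachS hspan (sB n hn) v)
      have h1 : wdist (↑S) (c2B n a b) u (sB n hn) ≤ φS n b S u := by
        rw [wdist_symm]; exact wdist_s_le_φ hspan hzero hn u
      have h2 := wdist_s_le_φ hspan hzero hn v
      have h3 := φS_le_DS (S := S) (b := b) u
      have h4 := φS_le_DS (S := S) (b := b) v
      calc wdist (↑S) (c2B n a b) u v ≤ DS n b S * 2 := by omega
        _ ≤ DS n b S * wdist (HB n a b).edgeSet (c2B n a b) u v :=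
          Nat.mul_le_mul_left _ hE
        _ ≤ _ := Nat.mul_le_mul_right _ hDn
  -- main equality
  have main : f2 (HB n a b).edgeSet (↑S) (c2B n a b) =
      (wdist (↑S) (c2B n a b) (sB n hn) (tB n hn) : ℚ) := by
    unfold f2
    split_ifs with hne
    · apply le_antisymm
      · apply Finset.sup'_le
        rintro ⟨u, v⟩ hmem
        have huv : u ≠ v := by
          simp only [Finset.mem_filter] at hmem
          exact hmem.2
        have hEpos : (0:ℚ) < (wdist (HB n a b).edgeSet (c2B n a b) u v : ℚ) := by
          have := one_le_wdist (HB n a b).edgeSet (c2B n a b) hposE huv (hreachE u v)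
          exact_mod_cast Nat.lt_of_lt_of_le Nat.zero_lt_one this
        rw [div_le_iff₀ hEpos]
        exact_mod_cast key u v huv
      · refine le_trans ?_ (Finset.le_sup' (b := ((sB n hn, tB n hn) : Vtx n × Vtx n)) _
          (by simp only [Finset.mem_filter]; exact ⟨Finset.mem_univ _, sB_ne_tB hn⟩))
        rw [hest]
        simp
    · exact absurd ⟨((sB n hn, tB n hn) : Vtx n × Vtx n),
        by simp only [Finset.mem_filter]; exact ⟨Finset.mem_univ _, sB_ne_tB hn⟩⟩ hne
  refine ⟨?_, main, hest⟩
  rw [main, hest]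
  norm_num

end MSpPaper
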